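/- (Theorem 2.4, first part) For every real p ≥ 1, the set ω_p^A = p_p(N(A)) is a nonempty closed bounded subset of l^p(A) and satisfies closure(⋃_{a∈A} f_a(ω_p^A)) = ω_p^A; that is, ω_p^A is the attractor of the infinite iterated function system (l^p(A), (f_a)_{a∈A}). -/

import Mathlib

open scoped ENNReal
open Filter Topology

/-- For a sequence `α : ℕ → A`, the function `p_p(α) : A' → ℝ` (where `A' = A \ {z}`)
given by `p_p(α)(b) = ∑_{k ∈ ℕ, α k = b} 2^{-(k+1)}`. -/
noncomputable def pFun {A : Type*} (z : A) (α : ℕ → A) (b : {b : A // b ≠ z}) : ℝ :=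
  ∑' k : {k : ℕ | α k = (b : A)}, (2 : ℝ)⁻¹ ^ ((k : ℕ) + 1)

lemma summable_base : Summable (fun k : ℕ => (2 : ℝ)⁻¹ ^ (k + 1)) := by
  apply Summable.comp_injective (summable_geometric_of_lt_one (by norm_num) (by norm_num))
    (add_left_injective 1)

lemma tsum_base : ∑' k : ℕ, (2 : ℝ)⁻¹ ^ (k + 1) = 1 := by
  have h : ∀ k : ℕ, (2 : ℝ)⁻¹ ^ (k + 1) = 2⁻¹ * 2⁻¹ ^ k := fun k => by ring
  rw [tsum_congr h, tsum_mul_left, tsum_geometric_of_lt_one (by norm_num) (by norm_num)]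
  norm_num

lemma pFun_nonneg {A : Type*} (z : A) (α : ℕ → A) (b : {b : A // b ≠ z}) :
    0 ≤ pFun z α b :=
  tsum_nonneg fun k => by positivity

lemma pFun_eq_indicator {A : Type*} (z : A) (α : ℕ → A) (b : {b : A // b ≠ z}) :
    pFun z α b =
      ∑' k : ℕ, Set.indicator {k : ℕ | α k = (b : A)} (fun k => (2 : ℝ)⁻¹ ^ (k + 1)) k := by
  unfold pFun
  exact tsum_subtype {k : ℕ | α k = (b : A)} (fun k => (2 : ℝ)⁻¹ ^ (k + 1))

lemma summable_pFun {A : Type*} (z : A) (α : ℕ → A) : Summable (pFun z α) := by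
  classical
  apply summable_of_sum_le (c := 1) (pFun_nonneg z α)
  intro s
  have hind : ∀ b : {b : A // b ≠ z},
      Summable (Set.indicator {k : ℕ | α k = (b : A)} (fun k => (2 : ℝ)⁻¹ ^ (k + 1))) :=
    fun b => summable_base.indicator _
  have h1 : ∑ b ∈ s, pFun z α b
      = ∑' k : ℕ, ∑ b ∈ s, Set.indicator {k : ℕ | α k = (b : A)}
          (fun k => (2 : ℝ)⁻¹ ^ (k + 1)) k := by
    rw [Finset.sum_congr rfl fun b _ => pFun_eq_indicator z α b]
    exact (Summable.tsum_finsetSum fun b _ => hind b).symm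
  have hle : ∀ k : ℕ, ∑ b ∈ s, Set.indicator {k : ℕ | α k = (b : A)}
      (fun k => (2 : ℝ)⁻¹ ^ (k + 1)) k ≤ (2 : ℝ)⁻¹ ^ (k + 1) := by
    intro k
    by_cases hz : α k = z
    · have : ∀ b ∈ s, Set.indicator {k : ℕ | α k = (b : A)}
          (fun k => (2 : ℝ)⁻¹ ^ (k + 1)) k = 0 := by
        intro b _
        apply Set.indicator_of_notMem
        simp only [Set.mem_setOf_eq, hz]
        exact fun h => b.2 h.symm
      rw [Finset.sum_congr rfl this, Finset.sum_const, smul_zero]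
      positivity
    · have hb : ∀ b ∈ s, Set.indicator {k : ℕ | α k = (b : A)}
          (fun k => (2 : ℝ)⁻¹ ^ (k + 1)) k
          = if b = (⟨α k, hz⟩ : {b : A // b ≠ z}) then (2 : ℝ)⁻¹ ^ (k + 1) else 0 := by
        intro b _
        rw [Set.indicator_apply]
        congr 1
        simp only [Set.mem_setOf_eq, eq_comm (a := α k)]
        rw [Subtype.ext_iff]
      rw [Finset.sum_congr rfl hb, Finset.sum_ite_eq' s _ (fun _ => (2 : ℝ)⁻¹ ^ (k + 1))]
      split_ifs
      · exact le_rfl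
      · positivity
  have hnn : ∀ k : ℕ, 0 ≤ ∑ b ∈ s, Set.indicator {k : ℕ | α k = (b : A)}
      (fun k => (2 : ℝ)⁻¹ ^ (k + 1)) k := by
    intro k
    apply Finset.sum_nonneg
    intro b _
    exact Set.indicator_nonneg (fun k _ => by positivity) k
  rw [h1, ← tsum_base]
  exact Summable.tsum_le_tsum hle (Summable.of_nonneg_of_le hnn hle summable_base) summable_base

lemma pFun_memℓp {A : Type*} (z : A) (α : ℕ → A) {P : ℝ≥0∞} (hP : 1 ≤ P) :
    Memℓp (pFun z α) P := by
  apply Memℓp.of_exponent_ge (q := 1) _ hP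
  apply memℓp_gen
  simp only [ENNReal.toReal_one, Real.rpow_one]
  apply Summable.congr (summable_pFun z α)
  intro b
  rw [Real.norm_of_nonneg (pFun_nonneg z α b)]

/-- The map `p_p : N(A) → l^p(A)`, sending `α` to the element of `l^p(A)` with
coordinates `p_p(α)(b) = ∑_{k ∈ ℕ, α k = b} 2^{-(k+1)}`. -/
noncomputable def pp {A : Type*} (z : A) (α : ℕ → A) (P : ℝ≥0∞) [Fact (1 ≤ P)] :
    lp (fun _ : {b : A // b ≠ z} => ℝ) P :=
  ⟨pFun z α, pFun_memℓp z α Fact.out⟩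

/-- The element `u_a` of `l^p(A)`: `u_z = 0` and, for `a ≠ z`, `u_a` is the indicator
function of `{a}` on `A' = A \ {z}`. -/
noncomputable def uElem {A : Type*} (z : A) (P : ℝ≥0∞) (a : A) :
    lp (fun _ : {b : A // b ≠ z} => ℝ) P :=
  letI := Classical.decEq A
  letI := Classical.decEq {b : A // b ≠ z}
  if h : a = z then 0 else lp.single P ⟨a, h⟩ 1

/-- The map `f_a : l^p(A) → l^p(A)`, `f_a(x) = (x + u_a)/2`. -/
noncomputable def fMap {A : Type*} (z : A) (P : ℝ≥0∞) (a : A)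
    (x : lp (fun _ : {b : A // b ≠ z} => ℝ) P) : lp (fun _ : {b : A // b ≠ z} => ℝ) P :=
  (2 : ℝ)⁻¹ • (x + uElem z P a)

section Aux

variable {A : Type*}

lemma pFun_le_one (z : A) (α : ℕ → A) (b : {b : A // b ≠ z}) : pFun z α b ≤ 1 := by
  rw [pFun_eq_indicator, ← tsum_base]
  exact Summable.tsum_le_tsum
    (fun k => Set.indicator_le_self' (fun k _ => by positivity) k)
    (summable_base.indicator _) summable_base

lemma sum_pFun_le_one (z : A) (α : ℕ → A) (s : Finset {b : A // b ≠ z}) :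
    ∑ b ∈ s, pFun z α b ≤ 1 := by
  classical
  have hind : ∀ b : {b : A // b ≠ z},
      Summable (Set.indicator {k : ℕ | α k = (b : A)} (fun k => (2 : ℝ)⁻¹ ^ (k + 1))) :=
    fun b => summable_base.indicator _
  have h1 : ∑ b ∈ s, pFun z α b
      = ∑' k : ℕ, ∑ b ∈ s, Set.indicator {k : ℕ | α k = (b : A)}
          (fun k => (2 : ℝ)⁻¹ ^ (k + 1)) k := by
    rw [Finset.sum_congr rfl fun b _ => pFun_eq_indicator z α b]
    exact (Summable.tsum_finsetSum fun b _ => hind b).symm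
  have hle : ∀ k : ℕ, ∑ b ∈ s, Set.indicator {k : ℕ | α k = (b : A)}
      (fun k => (2 : ℝ)⁻¹ ^ (k + 1)) k ≤ (2 : ℝ)⁻¹ ^ (k + 1) := by
    intro k
    by_cases hz : α k = z
    · have : ∀ b ∈ s, Set.indicator {k : ℕ | α k = (b : A)}
          (fun k => (2 : ℝ)⁻¹ ^ (k + 1)) k = 0 := by
        intro b _
        apply Set.indicator_of_notMem
        simp only [Set.mem_setOf_eq, hz]
        exact fun h => b.2 h.symm
      rw [Finset.sum_congr rfl this, Finset.sum_const, smul_zero]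
      positivity
    · have hb : ∀ b ∈ s, Set.indicator {k : ℕ | α k = (b : A)}
          (fun k => (2 : ℝ)⁻¹ ^ (k + 1)) k
          = if b = (⟨α k, hz⟩ : {b : A // b ≠ z}) then (2 : ℝ)⁻¹ ^ (k + 1) else 0 := by
        intro b _
        rw [Set.indicator_apply]
        congr 1
        simp only [Set.mem_setOf_eq, eq_comm (a := α k)]
        rw [Subtype.ext_iff]
      rw [Finset.sum_congr rfl hb, Finset.sum_ite_eq' s _ (fun _ => (2 : ℝ)⁻¹ ^ (k + 1))]
      split_ifs
      · exact le_rfl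
      · positivity
  rw [h1, ← tsum_base]
  have hnn : ∀ k : ℕ, 0 ≤ ∑ b ∈ s, Set.indicator {k : ℕ | α k = (b : A)}
      (fun k => (2 : ℝ)⁻¹ ^ (k + 1)) k := by
    intro k
    exact Finset.sum_nonneg fun b _ => Set.indicator_nonneg (fun k _ => by positivity) k
  exact Summable.tsum_le_tsum hle (Summable.of_nonneg_of_le hnn hle summable_base) summable_base

lemma tsum_pFun_le_one (z : A) (α : ℕ → A) : ∑' b, pFun z α b ≤ 1 :=
  Summable.tsum_le_of_sum_le (summable_pFun z α) (sum_pFun_le_one z α)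

lemma pp_apply (z : A) (α : ℕ → A) (P : ℝ≥0∞) [Fact (1 ≤ P)] (b : {b : A // b ≠ z}) :
    pp z α P b = pFun z α b := rfl

lemma pp_norm_le_one (z : A) (α : ℕ → A) (P : ℝ≥0∞) [Fact (1 ≤ P)] (hP : P ≠ ∞) :
    ‖pp z α P‖ ≤ 1 := by
  have h1P : (1:ℝ≥0∞) ≤ P := Fact.out
  have hp0 : 0 < P.toReal :=
    ENNReal.toReal_pos (by intro h; rw [h] at h1P; simp at h1P) hP
  have hp1 : 1 ≤ P.toReal := by
    have := ENNReal.toReal_mono hP h1P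
    simpa using this
  apply lp.norm_le_of_tsum_le hp0 (by norm_num)
  rw [Real.one_rpow]
  have hsum : ∀ b : {b : A // b ≠ z}, ‖pp z α P b‖ ^ P.toReal ≤ pFun z α b := by
    intro b
    rw [pp_apply, Real.norm_of_nonneg (pFun_nonneg z α b)]
    rcases eq_or_lt_of_le (pFun_nonneg z α b) with h0 | h0
    · rw [← h0, Real.zero_rpow (ne_of_gt hp0)]
    · calc pFun z α b ^ P.toReal ≤ pFun z α b ^ (1:ℝ) :=
            Real.rpow_le_rpow_of_exponent_ge h0 (pFun_le_one z α b) hp1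
        _ = pFun z α b := Real.rpow_one _
  exact le_trans
    (Summable.tsum_le_tsum hsum ((lp.memℓp (pp z α P)).summable hp0) (summable_pFun z α))
    (tsum_pFun_le_one z α)

end Aux

section Aux2

open scoped Classical

variable {A : Type*}

lemma uElem_apply (z : A) (P : ℝ≥0∞) (a : A) (b : {b : A // b ≠ z}) :
    uElem z P a b = if a = (b : A) then 1 else 0 := by
  classical
  rw [uElem]
  by_cases h : a = z
  · rw [dif_pos h]
    have hab : a ≠ (b : A) := by
      intro hab
      exact b.2 (hab.symm.trans h)
    simp [hab]
  · rw [dif_neg h]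
    have hswap : ∀ (i1 i2 : DecidableEq {b : A // b ≠ z}) (i : {b : A // b ≠ z}) (v : ℝ),
        @lp.single {b : A // b ≠ z} (fun _ => ℝ) _ i1 P i v
          = @lp.single {b : A // b ≠ z} (fun _ => ℝ) _ i2 P i v := by
      intro i1 i2 i v
      congr 1
      exact Subsingleton.elim _ _
    rw [hswap _ inferInstance]
    by_cases hb : b = (⟨a, h⟩ : {b : A // b ≠ z})
    · subst hb
      rw [if_pos rfl]
      exact lp.single_apply_self P _ 1
    · rw [if_neg (fun hab => hb (Subtype.ext hab.symm))]
      exact lp.single_apply_ne P _ 1 hb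

lemma fMap_apply (z : A) (P : ℝ≥0∞) (a : A) (x : lp (fun _ : {b : A // b ≠ z} => ℝ) P)
    (b : {b : A // b ≠ z}) :
    fMap z P a x b = 2⁻¹ * (x b + uElem z P a b) := by
  rw [fMap]
  simp only [lp.coeFn_smul, lp.coeFn_add, Pi.smul_apply, Pi.add_apply, smul_eq_mul]

lemma pFun_cons (z : A) (α : ℕ → A) (b : {b : A // b ≠ z}) :
    pFun z α b = (if α 0 = (b : A) then (2:ℝ)⁻¹ else 0)
      + 2⁻¹ * pFun z (fun n => α (n + 1)) b := by
  classical
  rw [pFun_eq_indicator, pFun_eq_indicator,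
    Summable.tsum_eq_zero_add (summable_base.indicator _)]
  congr 1
  · simp [Set.indicator_apply]
  · rw [← tsum_mul_left]
    apply tsum_congr
    intro n
    simp only [Set.indicator_apply, Set.mem_setOf_eq]
    split_ifs with h <;> ring

lemma pp_cons (z : A) (α : ℕ → A) (P : ℝ≥0∞) [Fact (1 ≤ P)] :
    pp z α P = fMap z P (α 0) (pp z (fun n => α (n + 1)) P) := by
  apply lp.ext
  funext b
  show pFun z α b = fMap z P (α 0) (pp z (fun n => α (n + 1)) P) b
  rw [fMap_apply, uElem_apply, pp_apply, pFun_cons z α b]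
  split_ifs with h <;> ring

lemma fMap_sub (z : A) (P : ℝ≥0∞) [Fact (1 ≤ P)] (a : A)
    (x y : lp (fun _ : {b : A // b ≠ z} => ℝ) P) :
    fMap z P a x - fMap z P a y = (2:ℝ)⁻¹ • (x - y) := by
  rw [fMap, fMap, ← smul_sub]
  congr 1
  abel

lemma fMap_recover (z : A) (P : ℝ≥0∞) [Fact (1 ≤ P)] (a : A)
    (x : lp (fun _ : {b : A // b ≠ z} => ℝ) P) :
    (2:ℝ) • fMap z P a x - uElem z P a = x := by
  rw [fMap, smul_smul]
  norm_num

lemma fMap_of_recover (z : A) (P : ℝ≥0∞) [Fact (1 ≤ P)] (a : A)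
    (x : lp (fun _ : {b : A // b ≠ z} => ℝ) P) :
    fMap z P a ((2:ℝ) • x - uElem z P a) = x := by
  rw [fMap, sub_add_cancel, smul_smul]
  norm_num

lemma half_le_pFun (z : A) (α : ℕ → A) (b : {b : A // b ≠ z}) (h : α 0 = (b : A)) :
    (2:ℝ)⁻¹ ≤ pFun z α b := by
  have hs : Summable (fun k : {k : ℕ | α k = (b : A)} => (2 : ℝ)⁻¹ ^ ((k : ℕ) + 1)) :=
    (summable_base).subtype _
  unfold pFun
  calc (2:ℝ)⁻¹ = (2:ℝ)⁻¹ ^ ((0:ℕ) + 1) := by norm_num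
    _ ≤ _ := Summable.le_tsum hs ⟨0, h⟩ (fun j _ => by positivity)

end Aux2

section Aux3

variable {A : Type*}

set_option synthInstance.maxHeartbeats 1000000 in
lemma closure_step (z : A) (P : ℝ≥0∞) [Fact (1 ≤ P)] (hP : P ≠ ∞)
    {x : lp (fun _ : {b : A // b ≠ z} => ℝ) P}
    (hx : x ∈ closure (Set.range fun α : ℕ → A => pp z α P)) :
    ∃ a y, y ∈ closure (Set.range fun α : ℕ → A => pp z α P) ∧ x = fMap z P a y := by
  classical
  have h1P : (1:ℝ≥0∞) ≤ P := Fact.out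
  have hP0 : P ≠ 0 := by intro h; rw [h] at h1P; simp at h1P
  have hp0 : 0 < P.toReal := ENNReal.toReal_pos hP0 hP
  obtain ⟨u, hu, hulim⟩ := mem_closure_iff_seq_limit.mp hx
  choose β hβ using hu
  have hβ' : ∀ n, pp z (β n) P = u n := hβ
  -- Claim: some first digit occurs infinitely often
  have hfreq : ∃ a, ∃ᶠ n in Filter.atTop, β n 0 = a := by
    by_contra hc
    push_neg at hc
    -- hc : ∀ a, ∀ᶠ n in atTop, ¬ β n 0 = a
    obtain ⟨N, hN⟩ := Metric.tendsto_atTop.mp hulim 4⁻¹ (by norm_num)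
    -- the set of coordinates of x of size ≥ 1/4 is finite
    have hsx : Summable (fun b : {b : A // b ≠ z} => ‖x b‖ ^ P.toReal) :=
      (lp.memℓp x).summable hp0
    have hcof : ∀ᶠ b in Filter.cofinite, ‖x b‖ ^ P.toReal < 4⁻¹ ^ P.toReal :=
      hsx.tendsto_cofinite_zero.eventually (gt_mem_nhds (by positivity))
    have hfin0 : {b : {b : A // b ≠ z} | ¬ (‖x b‖ ^ P.toReal < 4⁻¹ ^ P.toReal)}.Finite :=
      Filter.eventually_cofinite.mp hcof
    have hSfin : {b : {b : A // b ≠ z} | (4:ℝ)⁻¹ ≤ ‖x b‖}.Finite := by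
      apply hfin0.subset
      intro b hb
      simp only [Set.mem_setOf_eq, not_lt]
      exact Real.rpow_le_rpow (by norm_num) hb hp0.le
    set T : Set A := insert z (Subtype.val '' {b : {b : A // b ≠ z} | (4:ℝ)⁻¹ ≤ ‖x b‖})
    have hTfin : T.Finite := (hSfin.image _).insert z
    have hev : ∀ᶠ n in Filter.atTop, ∀ a ∈ T, ¬ β n 0 = a :=
      (Filter.eventually_all_finite hTfin).mpr fun a _ => hc a
    obtain ⟨n, hn1, hn2⟩ := (hev.and (Filter.eventually_ge_atTop N)).exists
    have haz : β n 0 ≠ z := fun h => hn1 z (Set.mem_insert z _) h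
    set b : {b : A // b ≠ z} := ⟨β n 0, haz⟩
    have hxb : ‖x b‖ < 4⁻¹ := by
      by_contra hge
      exact hn1 (β n 0) (Set.mem_insert_iff.mpr (Or.inr ⟨b, not_lt.mp hge, rfl⟩)) rfl
    have hub : (2:ℝ)⁻¹ ≤ u n b := by
      rw [← hβ' n, pp_apply]
      exact half_le_pFun z (β n) b rfl
    have hdiff : ‖u n b - x b‖ < 4⁻¹ := by
      have h1 : ‖(u n - x) b‖ ≤ ‖u n - x‖ := lp.norm_apply_le_norm hP0 (u n - x) b
      have h2 : ‖u n - x‖ < 4⁻¹ := by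
        rw [← dist_eq_norm]
        exact hN n hn2
      calc ‖u n b - x b‖ = ‖(u n - x) b‖ := by rw [lp.coeFn_sub]; rfl
        _ ≤ ‖u n - x‖ := h1
        _ < 4⁻¹ := h2
    rw [Real.norm_eq_abs] at hdiff hxb
    have := abs_lt.mp hdiff
    have := abs_lt.mp hxb
    linarith [this.1, this.2]
  obtain ⟨a, ha⟩ := hfreq
  refine ⟨a, (2:ℝ) • x - uElem z P a, ?_, ?_⟩
  · apply mem_closure_of_frequently_of_tendsto
      (f := fun n => (2:ℝ) • u n - uElem z P a)
    · apply ha.mono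
      intro n hn
      refine ⟨fun k => β n (k + 1), ?_⟩
      show pp z (fun k => β n (k + 1)) P = (2:ℝ) • u n - uElem z P a
      rw [← hn, ← hβ' n, pp_cons z (β n) P, fMap_recover]
    · exact (hulim.const_smul (2:ℝ)).sub tendsto_const_nhds
  · rw [fMap_of_recover]

end Aux3

/-- Theorem 2.4, first part. For every `p ∈ [1, ∞)`, the set
`ω_p^A = p_p(N(A))` is a nonempty closed bounded subset of `l^p(A)` with
`closure (⋃ a, f_a '' ω_p^A) = ω_p^A`; i.e. it is the attractor of the IIFS
`(l^p(A), (f_a)_{a ∈ A})`. -/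
theorem omega_is_attractor {A : Type*} [Infinite A] (z : A) (P : ℝ≥0∞) [Fact (1 ≤ P)]
    (hP : P ≠ ∞) :
    (Set.range fun α : ℕ → A => pp z α P).Nonempty ∧
    IsClosed (Set.range fun α : ℕ → A => pp z α P) ∧
    Bornology.IsBounded (Set.range fun α : ℕ → A => pp z α P) ∧
    closure (⋃ a : A, fMap z P a '' Set.range fun α : ℕ → A => pp z α P)
      = Set.range fun α : ℕ → A => pp z α P := by
  classical
  set ω := Set.range fun α : ℕ → A => pp z α P with hω
  have hball : ∀ v ∈ ω, ‖v‖ ≤ 1 := by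
    rintro v ⟨α, rfl⟩
    exact pp_norm_le_one z α P hP
  have hsub : ω ⊆ Metric.closedBall 0 1 := fun v hv => by
    simpa [Metric.mem_closedBall, dist_zero_right] using hball v hv
  have hclball : closure ω ⊆ Metric.closedBall 0 1 :=
    closure_minimal hsub Metric.isClosed_closedBall
  have hclnorm : ∀ v ∈ closure ω, ‖v‖ ≤ 1 := by
    intro v hv
    simpa [Metric.mem_closedBall, dist_zero_right] using hclball hv
  have hclosed : IsClosed ω := by
    apply isClosed_of_closure_subset
    intro x hx
    have step : ∀ v : lp (fun _ : {b : A // b ≠ z} => ℝ) P, v ∈ closure ω →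
        ∃ a y, y ∈ closure ω ∧ v = fMap z P a y := fun v hv => closure_step z P hP hv
    choose! aF yF hyF hvF using step
    let c : ℕ → lp (fun _ : {b : A // b ≠ z} => ℝ) P := fun n => Nat.rec x (fun _ v => yF v) n
    have hc0 : c 0 = x := rfl
    have hcs : ∀ n, c (n + 1) = yF (c n) := fun n => rfl
    have hcmem : ∀ n, c n ∈ closure ω := by
      intro n
      induction n with
      | zero => exact hx
      | succ n ih => rw [hcs n]; exact hyF (c n) ih
    set α : ℕ → A := fun n => aF (c n) with hα
    have hceq : ∀ n, c n = fMap z P (α n) (c (n + 1)) := fun n => by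
      rw [hcs n]; exact hvF (c n) (hcmem n)
    have key : ∀ m, x - pp z α P = ((2:ℝ)⁻¹) ^ m • (c m - pp z (fun n => α (n + m)) P) := by
      intro m
      induction m with
      | zero =>
        rw [pow_zero, one_smul]
        have hα0 : (fun n => α (n + 0)) = α := funext fun n => by simp
        rw [hα0, hc0]
      | succ m ih =>
        rw [ih]
        have e1 := pp_cons z (fun n => α (n + m)) P
        have ez : (0:ℕ) + m = m := by omega
        rw [ez] at e1
        have e2 : (fun n => α (n + 1 + m)) = (fun n => α (n + (m + 1))) :=
          funext fun n => congrArg α (show n + 1 + m = n + (m + 1) by omega)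
        rw [e2] at e1
        have h1 : c m - pp z (fun n => α (n + m)) P
            = (2:ℝ)⁻¹ • (c (m + 1) - pp z (fun n => α (n + (m + 1))) P) := by
          rw [e1, hceq m, fMap_sub]
        rw [h1, smul_smul, ← pow_succ]
    have hest : ∀ m, ‖x - pp z α P‖ ≤ (2:ℝ)⁻¹ ^ m * 2 := by
      intro m
      rw [key m, norm_smul]
      have hb2 : ‖c m - pp z (fun n => α (n + m)) P‖ ≤ 2 := by
        calc ‖c m - pp z (fun n => α (n + m)) P‖
            ≤ ‖c m‖ + ‖pp z (fun n => α (n + m)) P‖ := norm_sub_le _ _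
          _ ≤ 1 + 1 := add_le_add (hclnorm _ (hcmem m)) (pp_norm_le_one z _ P hP)
          _ = 2 := by norm_num
      have hn : ‖(2:ℝ)⁻¹ ^ m‖ = (2:ℝ)⁻¹ ^ m := by
        rw [Real.norm_eq_abs, abs_pow, abs_of_nonneg (by norm_num : (0:ℝ) ≤ 2⁻¹)]
      rw [hn]
      exact mul_le_mul_of_nonneg_left hb2 (by positivity)
    have hzero : ‖x - pp z α P‖ ≤ 0 := by
      have hlim : Filter.Tendsto (fun m : ℕ => (2:ℝ)⁻¹ ^ m * 2) Filter.atTop (𝓝 0) := by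
        have := (tendsto_pow_atTop_nhds_zero_of_lt_one (by norm_num : (0:ℝ) ≤ 2⁻¹)
          (by norm_num : (2:ℝ)⁻¹ < 1)).mul_const (2:ℝ)
        simpa using this
      exact ge_of_tendsto' hlim hest
    have hxeq : x = pp z α P := by
      have := le_antisymm hzero (norm_nonneg _)
      rwa [norm_eq_zero, sub_eq_zero] at this
    exact ⟨α, hxeq.symm⟩
  have hunion : (⋃ a : A, fMap z P a '' ω) = ω := by
    ext v
    constructor
    · rintro ⟨s, ⟨a, rfl⟩, w, ⟨γ, rfl⟩, rfl⟩
      refine ⟨fun n => Nat.rec a (fun k _ => γ k) n, ?_⟩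
      show pp z (fun n => Nat.rec a (fun k _ => γ k) n) P = fMap z P a (pp z γ P)
      rw [pp_cons]
      rfl
    · rintro ⟨γ, rfl⟩
      exact Set.mem_iUnion.mpr ⟨γ 0, pp z (fun n => γ (n + 1)) P, ⟨_, rfl⟩,
        (pp_cons z γ P).symm⟩
  exact ⟨⟨pp z (fun _ => z) P, Set.mem_range_self _⟩, hclosed,
    Metric.isBounded_closedBall.subset hsub, by rw [hunion, hclosed.closure_eq]⟩
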